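/- For every ordinal μ < I and every ordinal α, Ω_μ < ψ_{Ω_{μ+1}} α < Ω_{μ+1}. -/

import Mathlib

open Ordinal Set

noncomputable section

/-- A cardinal is weakly inaccessible: uncountable, regular, and a limit cardinal. -/
def WeaklyInaccessible (c : Cardinal) : Prop :=
  Cardinal.aleph0 < c ∧ c.IsRegular ∧ ∀ x < c, Order.succ x < c

/-- `I` is (the initial ordinal of) the least weakly inaccessible cardinal. -/
def I : Ordinal := (sInf {c : Cardinal | WeaklyInaccessible c}).ord

/-- `Om α` is `Ω_α`: `0` for `α = 0` and the initial ordinal of `ℵ_α` otherwise. -/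
def Om (α : Ordinal) : Ordinal := if α = 0 then 0 else (Cardinal.aleph α).ord

/-- `R = {Ω_{μ+1} : μ < I} ∪ {I}`. -/
def R : Set Ordinal := {o | (∃ μ < I, o = Om (μ + 1)) ∨ o = I}

/-- Given the family of hulls at earlier stages, the collapse `ψ_σ`. -/
def psiOf (F : Set Ordinal → Set Ordinal) (σ : Ordinal) : Ordinal :=
  sInf ({β | β < σ ∧ σ ∈ F (Set.Iio β) ∧ F (Set.Iio β) ∩ Set.Iio σ ⊆ Set.Iio β} ∪ {σ})

instance : WellFoundedRelation Ordinal := ⟨(· < ·), Ordinal.lt_wf⟩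

/-- `H α X` is the least set of ordinals containing `X ∪ {0, I}` and closed under
ordinal addition, `β ↦ ω^β`, `β ↦ Ω_β`, and `(σ, β) ↦ ψ_σ β` for `σ ∈ R` and `β < α`. -/
def H (α : Ordinal) (X : Set Ordinal) : Set Ordinal :=
  ⋂₀ {Y : Set Ordinal | X ∪ {0, I} ⊆ Y ∧
      (∀ γ ∈ Y, ∀ δ ∈ Y, γ + δ ∈ Y) ∧
      (∀ γ ∈ Y, Ordinal.omega0 ^ γ ∈ Y) ∧
      (∀ γ ∈ Y, Om γ ∈ Y) ∧
      (∀ σ ∈ R, ∀ β ∈ Y, β < α → σ ∈ Y → psiOf (H β) σ ∈ Y)}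
termination_by α
decreasing_by assumption

/-- The collapsing function `ψ_σ α`. -/
def psi (σ α : Ordinal) : Ordinal := psiOf (H α) σ

-- ===== auxiliary lemmas =====
open Cardinal

/-- The closedness predicate from the definition of `H`. -/
def Cl (α : Ordinal) (X : Set Ordinal) (Y : Set Ordinal) : Prop :=
  X ∪ {0, I} ⊆ Y ∧
      (∀ γ ∈ Y, ∀ δ ∈ Y, γ + δ ∈ Y) ∧
      (∀ γ ∈ Y, Ordinal.omega0 ^ γ ∈ Y) ∧
      (∀ γ ∈ Y, Om γ ∈ Y) ∧
      (∀ σ ∈ R, ∀ β ∈ Y, β < α → σ ∈ Y → psiOf (H β) σ ∈ Y)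

theorem H_def (α : Ordinal) (X : Set Ordinal) : H α X = ⋂₀ {Y : Set Ordinal | Cl α X Y} := by
  rw [H]; rfl

theorem H_subset {α X Y} (h : Cl α X Y) : H α X ⊆ Y := by
  rw [H_def]; exact fun x hx => hx Y h

theorem mem_H {α X x} (h : ∀ Y, Cl α X Y → x ∈ Y) : x ∈ H α X := by
  rw [H_def]; exact fun Y hY => h Y hY

theorem subset_H {α X} : X ⊆ H α X :=
  fun x hx => mem_H fun _ hY => hY.1 (Or.inl hx)

theorem zero_mem_H {α X} : (0 : Ordinal) ∈ H α X :=
  mem_H fun _ hY => hY.1 (Or.inr (Or.inl rfl))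

theorem I_mem_H {α X} : I ∈ H α X :=
  mem_H fun _ hY => hY.1 (Or.inr (Or.inr rfl))

theorem add_mem_H {α X γ δ} (hγ : γ ∈ H α X) (hδ : δ ∈ H α X) : γ + δ ∈ H α X :=
  mem_H fun Y hY => hY.2.1 γ (by rw [H_def] at hγ; exact hγ Y hY) δ
    (by rw [H_def] at hδ; exact hδ Y hY)

theorem opow_mem_H {α X γ} (hγ : γ ∈ H α X) : Ordinal.omega0 ^ γ ∈ H α X :=
  mem_H fun Y hY => hY.2.2.1 γ (by rw [H_def] at hγ; exact hγ Y hY)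

theorem Om_mem_H {α X γ} (hγ : γ ∈ H α X) : Om γ ∈ H α X :=
  mem_H fun Y hY => hY.2.2.2.1 γ (by rw [H_def] at hγ; exact hγ Y hY)

theorem psi_mem_H {α X σ β} (hσR : σ ∈ R) (hβ : β ∈ H α X) (hβα : β < α) (hσ : σ ∈ H α X) :
    psiOf (H β) σ ∈ H α X :=
  mem_H fun Y hY => hY.2.2.2.2 σ hσR β (by rw [H_def] at hβ; exact hβ Y hY) hβα
    (by rw [H_def] at hσ; exact hσ Y hY)

theorem Cl_H {α X} : Cl α X (H α X) :=
  ⟨union_subset subset_H (by rintro x (rfl | rfl); exacts [zero_mem_H, I_mem_H]),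
   fun γ hγ δ hδ => add_mem_H hγ hδ, fun γ hγ => opow_mem_H hγ, fun γ hγ => Om_mem_H hγ,
   fun σ hσR β hβ hβα hσ => psi_mem_H hσR hβ hβα hσ⟩

theorem H_mono {α X X'} (h : X ⊆ X') : H α X ⊆ H α X' :=
  H_subset ⟨union_subset (h.trans (Cl_H.1.trans' subset_union_left))
    (Cl_H.1.trans' subset_union_right),
    Cl_H.2.1, Cl_H.2.2.1, Cl_H.2.2.2.1, Cl_H.2.2.2.2⟩

theorem self_le_ord_aleph : ∀ μ : Ordinal, μ ≤ (ℵ_ μ).ord := by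
  intro μ
  induction μ using Ordinal.induction with
  | h μ ih =>
    rcases le_or_gt μ ((ℵ_ μ).ord) with h | h
    · exact h
    · exfalso
      have h1 : (ℵ_ ((ℵ_ μ).ord)).ord < (ℵ_ μ).ord :=
        Cardinal.ord_lt_ord.2 (Cardinal.aleph_lt_aleph.2 h)
      exact absurd (ih _ h) (not_le.2 h1)

theorem add_one_ne_zero' {μ : Ordinal} : μ + 1 ≠ 0 := by
  rw [Ordinal.add_one_eq_succ]; exact Ordinal.succ_ne_zero μ

theorem Om_lt_Om {a b : Ordinal} (hb : b ≠ 0) (h : a < b) : Om a < Om b := by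
  unfold Om
  rw [if_neg hb]
  rcases eq_or_ne a 0 with rfl | ha
  · rw [if_pos rfl]
    rw [Cardinal.lt_ord]
    simpa using (aleph0_pos.trans_le (aleph0_le_aleph b))
  · rw [if_neg ha]
    exact Cardinal.ord_lt_ord.2 (Cardinal.aleph_lt_aleph.2 h)

theorem Om_succ_eq (μ : Ordinal) : Om (μ + 1) = (ℵ_ (μ + 1)).ord := by
  unfold Om; rw [if_neg add_one_ne_zero']

theorem self_lt_Om_succ (μ : Ordinal) : μ + 1 < Om (μ + 1) := by
  rw [Om_succ_eq, Cardinal.lt_ord, Ordinal.card_add, Ordinal.card_one]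
  refine Cardinal.add_lt_of_lt (aleph0_le_aleph _) ?_ ?_
  · have : μ < (ℵ_ (μ + 1)).ord :=
      (self_le_ord_aleph μ).trans_lt (Cardinal.ord_lt_ord.2 (Cardinal.aleph_lt_aleph.2 (by
        rw [Ordinal.add_one_eq_succ]; exact Order.lt_succ μ)))
    exact Cardinal.lt_ord.1 this
  · exact one_lt_aleph0.trans_le (aleph0_le_aleph _)

theorem Om_injOn {γ μ : Ordinal} (h : Om γ = Om (μ + 1)) : γ = μ + 1 := by
  have hpos : (0:Ordinal) < Om (μ + 1) := by
    have := Om_lt_Om (a := 0) (b := μ + 1) add_one_ne_zero'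
      (pos_iff_ne_zero.2 add_one_ne_zero')
    simpa [Om] using this
  have hγ : γ ≠ 0 := by rintro rfl; simp [Om] at h; exact hpos.ne' (by simp [Om, ← h])
  unfold Om at h
  rw [if_neg hγ, if_neg add_one_ne_zero'] at h
  have := Cardinal.ord_injective h
  by_contra hne
  rcases lt_or_gt_of_ne hne with h' | h'
  · exact absurd this (Cardinal.aleph_lt_aleph.2 h').ne
  · exact absurd this.symm (Cardinal.aleph_lt_aleph.2 h').ne

theorem sSup_lt_ord'.{u} {S : Set Ordinal.{u}} {c : Cardinal.{u}} {o : Ordinal.{u}} (ho : 0 < o)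
    (hc : c < o.cof) (hS : #S ≤ Cardinal.lift.{u+1} c) (hlt : ∀ x ∈ S, x < o) :
    sSup S < o := by
  rcases S.eq_empty_or_nonempty with rfl | hne
  · simpa using ho
  · have hS' : Cardinal.lift.{u, u+1} #S ≤ Cardinal.lift.{u+1} (#c.out) := by
      rwa [Cardinal.lift_id'.{u, u+1}, Cardinal.mk_out]
    obtain ⟨e⟩ := Cardinal.lift_mk_le'.1 hS'
    haveI : Nonempty S := hne.to_subtype
    have hsurj : Function.Surjective (Function.invFun e) := Function.invFun_surjective e.injective
    have hlt' : ∀ i : c.out, ((Function.invFun e i : S) : Ordinal) < o := fun i =>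
      hlt _ (Subtype.coe_prop _)
    have hsup : iSup (fun i : c.out => ((Function.invFun e i : S) : Ordinal)) < o :=
      Ordinal.iSup_lt_ord (by rwa [Cardinal.mk_out]) hlt'
    refine lt_of_le_of_lt (csSup_le hne fun x hx => ?_) hsup
    obtain ⟨i, hi⟩ := hsurj ⟨x, hx⟩
    have : x = ((Function.invFun e i : S) : Ordinal) := by rw [hi]
    rw [this]
    exact le_ciSup (f := fun i : c.out => ((Function.invFun e i : S) : Ordinal))
      ⟨o, by rintro y ⟨i, rfl⟩; exact (hlt' i).le⟩ i

theorem opow_lt_ord.{u} {κ : Cardinal.{u}} (hreg : κ.IsRegular) (huc : ℵ₀ < κ)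
    {γ : Ordinal.{u}} (hγ : γ < κ.ord) : Ordinal.omega0 ^ γ < κ.ord := by
  induction γ using Ordinal.induction with
  | h γ ih =>
    rcases Ordinal.zero_or_succ_or_isSuccLimit γ with rfl | ⟨δ, rfl⟩ | hlim
    · rw [opow_zero, Cardinal.lt_ord]
      simpa using one_lt_aleph0.trans huc
    · rw [opow_succ]
      have h1 : Ordinal.omega0 ^ δ < κ.ord := ih δ (Order.lt_succ δ) ((Order.lt_succ δ).trans hγ)
      rw [Cardinal.lt_ord] at h1 ⊢
      rw [Ordinal.card_mul]
      exact Cardinal.mul_lt_of_lt hreg.aleph0_le h1 (by simpa using huc)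
    · rw [Ordinal.opow_limit omega0_ne_zero hlim]
      rw [Ordinal.iSup_Iio_eq_bsup.{u, u} (f := fun δ _ => Ordinal.omega0 ^ δ)]
      refine Ordinal.bsup_lt_ord ?_ fun δ hδ => ih δ hδ (hδ.trans hγ)
      rw [hreg.cof_eq]
      exact Cardinal.lt_ord.1 hγ

theorem aleph_lt_inacc.{u} {c : Cardinal.{u}} (hc : WeaklyInaccessible c) :
    ∀ ξ < c.ord, ℵ_ ξ < c := by
  intro ξ
  induction ξ using Ordinal.induction with
  | h ξ ih =>
    intro hξ
    rcases Ordinal.zero_or_succ_or_isSuccLimit ξ with rfl | ⟨ν, rfl⟩ | hlim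
    · simpa using hc.1
    · rw [Cardinal.aleph_succ]
      exact hc.2.2 _ (ih ν (Order.lt_succ ν) ((Order.lt_succ ν).trans hξ))
    · have hpos : 0 < c.ord := by
        rw [Cardinal.lt_ord]; simpa using aleph0_pos.trans hc.1
      have hsup : sSup ((fun a => (ℵ_ a).ord) '' (Iio ξ)) < c.ord := by
        refine sSup_lt_ord' hpos (c := ξ.card) ?_ ?_ ?_
        · rw [hc.2.1.cof_eq]; exact Cardinal.lt_ord.1 hξ
        · refine (Cardinal.mk_image_le).trans ?_
          rw [Ordinal.mk_Iio_ordinal]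
        · rintro x ⟨a, ha, rfl⟩
          rw [Cardinal.ord_lt_ord]
          exact ih a ha (ha.trans hξ)
      have hle : ℵ_ ξ ≤ (sSup ((fun a => (ℵ_ a).ord) '' (Iio ξ))).card := by
        rw [Cardinal.aleph_limit hlim]
        haveI : Nonempty (Iio ξ) := ⟨⟨0, hlim.pos⟩⟩
        refine ciSup_le' fun a => ?_
        have h1 : (ℵ_ (a : Ordinal)).ord ≤ sSup ((fun a => (ℵ_ a).ord) '' (Iio ξ)) := by
          refine le_csSup ?_ ⟨a, a.2, rfl⟩
          refine ⟨c.ord, ?_⟩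
          rintro y ⟨b, hb, rfl⟩
          exact (Cardinal.ord_lt_ord.2 (ih b hb (hb.trans hξ))).le
        calc ℵ_ (a : Ordinal) = (ℵ_ (a : Ordinal)).ord.card := (Cardinal.card_ord _).symm
          _ ≤ _ := Ordinal.card_le_card h1
      exact hle.trans_lt (Cardinal.lt_ord.1 hsup)

/-- one generation step -/
def stepSet (γ δ : Ordinal) : Set Ordinal :=
  {γ + δ, Ordinal.omega0 ^ γ, Om γ, psiOf (H δ) γ}

def W (α : Ordinal) (X : Set Ordinal) : ℕ → Set Ordinal
  | 0 => X ∪ {0, I}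
  | n + 1 => W α X n ∪ ⋃ γ ∈ W α X n, ⋃ δ ∈ W α X n, stepSet γ δ

theorem W_mono {α X} : Monotone (W α X) := by
  refine monotone_nat_of_le_succ fun n => ?_
  exact subset_union_left

theorem zero_mem_W {α X} (n : ℕ) : (0 : Ordinal) ∈ W α X n :=
  W_mono (Nat.zero_le n) (Or.inr (Or.inl rfl))

theorem Cl_W {α X} : Cl α X (⋃ n, W α X n) := by
  refine ⟨?_, ?_, ?_, ?_, ?_⟩
  · exact subset_iUnion_of_subset 0 (by rfl)
  · rintro γ hγ δ hδ
    rw [mem_iUnion] at hγ hδ ⊢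
    obtain ⟨n, hn⟩ := hγ; obtain ⟨m, hm⟩ := hδ
    refine ⟨max n m + 1, Or.inr ?_⟩
    rw [mem_iUnion₂]
    exact ⟨γ, W_mono (le_max_left n m) hn, by
      rw [mem_iUnion₂]; exact ⟨δ, W_mono (le_max_right n m) hm, Or.inl rfl⟩⟩
  · rintro γ hγ
    rw [mem_iUnion] at hγ ⊢
    obtain ⟨n, hn⟩ := hγ
    refine ⟨n + 1, Or.inr ?_⟩
    rw [mem_iUnion₂]
    exact ⟨γ, hn, by rw [mem_iUnion₂]; exact ⟨γ, hn, Or.inr (Or.inl rfl)⟩⟩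
  · rintro γ hγ
    rw [mem_iUnion] at hγ ⊢
    obtain ⟨n, hn⟩ := hγ
    refine ⟨n + 1, Or.inr ?_⟩
    rw [mem_iUnion₂]
    exact ⟨γ, hn, by rw [mem_iUnion₂]; exact ⟨γ, hn, Or.inr (Or.inr (Or.inl rfl))⟩⟩
  · rintro σ hσR β hβ hβα hσ
    rw [mem_iUnion] at hβ hσ ⊢
    obtain ⟨n, hn⟩ := hβ; obtain ⟨m, hm⟩ := hσ
    refine ⟨max n m + 1, Or.inr ?_⟩
    rw [mem_iUnion₂]
    exact ⟨σ, W_mono (le_max_right n m) hm, by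
      rw [mem_iUnion₂]
      exact ⟨β, W_mono (le_max_left n m) hn, Or.inr (Or.inr (Or.inr rfl))⟩⟩

theorem mk_W_le.{u} {α : Ordinal.{u}} {b : Ordinal.{u}} (n : ℕ) :
    #(W α (Iio b) n) ≤ Cardinal.lift.{u+1} (b.card + ℵ₀) := by
  set L : Cardinal.{u+1} := Cardinal.lift.{u+1} (b.card + ℵ₀) with hL
  have hLinf : ℵ₀ ≤ L := by
    rw [hL, Cardinal.lift_add, Cardinal.lift_aleph0]
    exact le_add_self
  induction n with
  | zero =>
    refine (Cardinal.mk_union_le _ _).trans ?_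
    have h1 : #(Iio b) = Cardinal.lift.{u+1} b.card := Ordinal.mk_Iio_ordinal b
    have h2 : #({0, I} : Set Ordinal) ≤ ℵ₀ := by
      exact (Set.toFinite _).lt_aleph0.le
    calc #(Iio b) + #({0, I} : Set Ordinal) ≤ Cardinal.lift.{u+1} b.card + ℵ₀ :=
          add_le_add h1.le h2
      _ = L := by rw [hL, Cardinal.lift_add, Cardinal.lift_aleph0]
  | succ n ih =>
    haveI : Nonempty (W α (Iio b) n) := ⟨⟨0, zero_mem_W n⟩⟩
    have hstep : ∀ γ δ : Ordinal, #(stepSet γ δ) ≤ ℵ₀ := by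
      intro γ δ
      have : (stepSet γ δ).Finite := by
        unfold stepSet
        exact (Set.finite_singleton _).insert _ |>.insert _ |>.insert _
      exact this.lt_aleph0.le
    have hinner : ∀ γ : Ordinal, #(⋃ δ ∈ W α (Iio b) n, stepSet γ δ) ≤ L := by
      intro γ
      refine (Cardinal.mk_biUnion_le _ _).trans ?_
      calc #(W α (Iio b) n) * ⨆ δ : W α (Iio b) n, #(stepSet γ δ) ≤ L * ℵ₀ :=
            mul_le_mul' ih (ciSup_le' fun δ => hstep γ δ)
        _ ≤ L * L := mul_le_mul' le_rfl hLinf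
        _ = L := Cardinal.mul_eq_self hLinf
    have houter : #(⋃ γ ∈ W α (Iio b) n, ⋃ δ ∈ W α (Iio b) n, stepSet γ δ) ≤ L := by
      refine (Cardinal.mk_biUnion_le _ _).trans ?_
      calc #(W α (Iio b) n) * ⨆ γ : W α (Iio b) n, #(⋃ δ ∈ W α (Iio b) n, stepSet (γ : Ordinal) δ)
            ≤ L * L := mul_le_mul' ih (ciSup_le' fun γ => hinner γ)
        _ = L := Cardinal.mul_eq_self hLinf
    show #(W α (Iio b) n ∪ _ : Set Ordinal) ≤ L
    refine (Cardinal.mk_union_le _ _).trans ?_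
    calc _ ≤ L + L := add_le_add ih houter
      _ = L := Cardinal.add_eq_self hLinf

theorem mk_H_le.{u} {α : Ordinal.{u}} {b : Ordinal.{u}} :
    #(H α (Iio b)) ≤ Cardinal.lift.{u+1} (b.card + ℵ₀) := by
  have h1 : H α (Iio b) ⊆ ⋃ n, W α (Iio b) n := H_subset Cl_W
  refine (Cardinal.mk_le_mk_of_subset h1).trans ?_
  have h2 : (⋃ n, W α (Iio b) n) = ⋃ u : ULift.{u+1} ℕ, W α (Iio b) u.down := by
    ext x; simp only [mem_iUnion]
    exact ⟨fun ⟨n, hn⟩ => ⟨⟨n⟩, hn⟩, fun ⟨u, hu⟩ => ⟨u.down, hu⟩⟩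
  rw [h2]
  refine (Cardinal.mk_iUnion_le _).trans ?_
  have hLinf : ℵ₀ ≤ Cardinal.lift.{u+1} (b.card + ℵ₀) := by
    rw [Cardinal.lift_add, Cardinal.lift_aleph0]; exact le_add_self
  haveI : Nonempty (ULift.{u+1} ℕ) := ⟨⟨0⟩⟩
  calc #(ULift.{u+1} ℕ) * ⨆ u : ULift.{u+1} ℕ, #(W α (Iio b) u.down)
      ≤ ℵ₀ * Cardinal.lift.{u+1} (b.card + ℵ₀) := by
        refine mul_le_mul' ?_ (ciSup_le' fun u => mk_W_le u.down)
        rw [Cardinal.mk_uLift, Cardinal.mk_denumerable, Cardinal.lift_aleph0]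
    _ ≤ _ := by
        refine le_trans (mul_le_mul' hLinf le_rfl) ?_
        rw [Cardinal.mul_eq_self hLinf]

theorem H_iSup_subset {α : Ordinal} {b : ℕ → Ordinal} (hmono : Monotone b) :
    H α (Iio (⨆ n, b n)) ⊆ ⋃ n, H α (Iio (b n)) := by
  refine H_subset ⟨?_, ?_, ?_, ?_, ?_⟩
  · rintro x (hx | hx)
    · have : ∃ n, x < b n := by
        by_contra hcon
        push_neg at hcon
        exact absurd (ciSup_le hcon) (not_le.2 hx)
      obtain ⟨n, hn⟩ := this
      exact mem_iUnion.2 ⟨n, subset_H hn⟩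
    · rcases hx with rfl | rfl
      · exact mem_iUnion.2 ⟨0, zero_mem_H⟩
      · exact mem_iUnion.2 ⟨0, I_mem_H⟩
  · rintro γ hγ δ hδ
    rw [mem_iUnion] at hγ hδ ⊢
    obtain ⟨n, hn⟩ := hγ; obtain ⟨m, hm⟩ := hδ
    exact ⟨max n m, add_mem_H (H_mono (Iio_subset_Iio (hmono (le_max_left n m))) hn)
      (H_mono (Iio_subset_Iio (hmono (le_max_right n m))) hm)⟩
  · rintro γ hγ
    rw [mem_iUnion] at hγ ⊢
    obtain ⟨n, hn⟩ := hγ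
    exact ⟨n, opow_mem_H hn⟩
  · rintro γ hγ
    rw [mem_iUnion] at hγ ⊢
    obtain ⟨n, hn⟩ := hγ
    exact ⟨n, Om_mem_H hn⟩
  · rintro σ hσR β hβ hβα hσ
    rw [mem_iUnion] at hβ hσ ⊢
    obtain ⟨n, hn⟩ := hβ; obtain ⟨m, hm⟩ := hσ
    exact ⟨max n m, psi_mem_H hσR (H_mono (Iio_subset_Iio (hmono (le_max_left n m))) hn) hβα
      (H_mono (Iio_subset_Iio (hmono (le_max_right n m))) hm)⟩

/-- Any `ψ`-candidate for `Ω_{μ+1}` lies above `Ω_μ`. -/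
theorem cand_gt {α β μ : Ordinal} (hσI : Om (μ + 1) < I) (hβσ : β < Om (μ + 1))
    (h1 : Om (μ + 1) ∈ H α (Iio β))
    (h2 : H α (Iio β) ∩ Iio (Om (μ + 1)) ⊆ Iio β)
    (hAP : ∀ x y : Ordinal, x < Om (μ + 1) → y < Om (μ + 1) → x + y < Om (μ + 1))
    (hOP : ∀ γ < Om (μ + 1), Ordinal.omega0 ^ γ < Om (μ + 1)) :
    Om μ < β := by
  set σ := Om (μ + 1) with hσ
  have hOmμσ : Om μ < σ := Om_lt_Om add_one_ne_zero'
    (by rw [Ordinal.add_one_eq_succ]; exact Order.lt_succ μ)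
  have hσ0 : (0:Ordinal) < σ := by
    rcases eq_or_ne (Om μ) 0 with h | h
    · rw [h] at hOmμσ; exact hOmμσ
    · exact (pos_iff_ne_zero.2 h).trans hOmμσ
  by_contra hcon
  push_neg at hcon
  have hOmnot : Om μ ∉ H α (Iio β) := fun hm =>
    absurd ((h2 ⟨hm, hOmμσ⟩).trans_le hcon) (lt_irrefl _)
  have hμ1not : μ + 1 ∉ H α (Iio β) := by
    intro hm
    have h3 : μ + 1 < β := h2 ⟨hm, self_lt_Om_succ μ⟩
    have h4 : μ < β := lt_trans (by rw [Ordinal.add_one_eq_succ]; exact Order.lt_succ μ) h3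
    exact hOmnot (Om_mem_H (subset_H h4))
  have hY : Cl α (Iio β) (H α (Iio β) \ {σ}) := by
    refine ⟨?_, ?_, ?_, ?_, ?_⟩
    · rintro x (hx | hx)
      · exact ⟨subset_H hx, fun h => absurd (h ▸ hx) (not_lt.2 (hcon.trans hOmμσ.le))⟩
      · rcases hx with rfl | rfl
        · exact ⟨zero_mem_H, fun h => absurd (h ▸ hσ0) (lt_irrefl _)⟩
        · exact ⟨I_mem_H, fun h => absurd (h ▸ hσI) (lt_irrefl _)⟩
    · rintro γ ⟨hγ, hγne⟩ δ ⟨hδ, hδne⟩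
      refine ⟨add_mem_H hγ hδ, fun he => ?_⟩
      simp only [mem_singleton_iff] at he hγne hδne
      have hγσ : γ < σ := lt_of_le_of_ne (he ▸ (le_self_add : γ ≤ γ + δ)) hγne
      have hδσ : δ < σ := lt_of_le_of_ne (he ▸ (le_add_self : δ ≤ γ + δ)) hδne
      exact absurd he (hAP γ δ hγσ hδσ).ne
    · rintro γ ⟨hγ, hγne⟩
      refine ⟨opow_mem_H hγ, fun he => ?_⟩
      simp only [mem_singleton_iff] at he hγne
      have hγσ : γ < σ := lt_of_le_of_ne
        (he ▸ Ordinal.right_le_opow γ Ordinal.one_lt_omega0) hγne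
      exact absurd he (hOP γ hγσ).ne
    · rintro γ ⟨hγ, hγne⟩
      refine ⟨Om_mem_H hγ, fun he => ?_⟩
      simp only [mem_singleton_iff] at he
      exact hμ1not ((Om_injOn (hσ ▸ he)) ▸ hγ)
    · rintro σ' hσ'R β' ⟨hβ', hβ'ne⟩ hβ'α ⟨hσ', hσ'ne⟩
      refine ⟨psi_mem_H hσ'R hβ' hβ'α hσ', fun he => ?_⟩
      simp only [mem_singleton_iff] at he hσ'ne
      have hp : psiOf (H β') σ' ∈
          ({b | b < σ' ∧ σ' ∈ H β' (Iio b) ∧ H β' (Iio b) ∩ Iio σ' ⊆ Iio b} ∪ {σ'} :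
            Set Ordinal) := csInf_mem ⟨σ', Or.inr rfl⟩
      rcases hp with ⟨hpσ', hσ'mem, hsub⟩ | hp
      · rcases lt_trichotomy σ' σ with hlt | heq | hgt
        · exact absurd (he ▸ hpσ') (not_lt.2 hlt.le)
        · exact hσ'ne heq
        · have hμ1p : μ + 1 ∈ Iio (psiOf (H β') σ') := by
            rw [he]; exact self_lt_Om_succ μ
          have hσmem : σ ∈ H β' (Iio (psiOf (H β') σ')) := Om_mem_H (subset_H hμ1p)
          have : σ ∈ Iio (psiOf (H β') σ') := hsub ⟨hσmem, hgt⟩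
          rw [he] at this
          exact absurd (mem_Iio.1 this) (lt_irrefl _)
      · rw [mem_singleton_iff] at hp
        exact hσ'ne (he ▸ hp.symm)
  have : σ ∈ H α (Iio β) \ {σ} := H_subset hY h1
  exact this.2 rfl

/-- The relation `δ₀ ≪ δ₁ {η}`. -/
def llr (η δ₀ δ₁ : Ordinal) : Prop :=
  δ₀ < δ₁ ∧ ∀ σ ∈ R, ∀ α : Ordinal,
    δ₁ ∈ H α (Set.Iio (psi σ α)) → η ∈ H α (Set.Iio (psi σ α)) → δ₀ ∈ H α (Set.Iio (psi σ α))

theorem stmt1 (hex : ∃ c : Cardinal, WeaklyInaccessible c) :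
    ∀ μ < I, ∀ α : Ordinal,
      Om μ < psi (Om (μ + 1)) α ∧ psi (Om (μ + 1)) α < Om (μ + 1) := by
  intro μ hμ α
  rcases ({c : Cardinal.{u_2} | WeaklyInaccessible c}).eq_empty_or_nonempty with hemp | hne
  · exfalso
    have hI : (I : Ordinal.{u_2}) = (sInf {c : Cardinal.{u_2} | WeaklyInaccessible c}).ord := rfl
    rw [hI, hemp] at hμ
    simp [Cardinal.sInf_empty] at hμ
  have hc : WeaklyInaccessible (sInf {c : Cardinal.{u_2} | WeaklyInaccessible c}) := csInf_mem hne
  have hI : (I : Ordinal.{u_2}) = (sInf {c : Cardinal.{u_2} | WeaklyInaccessible c}).ord := rfl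
  set σp := Om (μ + 1) with hσp
  have hσord : σp = (ℵ_ (μ+1)).ord := Om_succ_eq μ
  have hκreg : (ℵ_ (μ+1)).IsRegular := by
    rw [Ordinal.add_one_eq_succ]; exact Cardinal.isRegular_aleph_succ μ
  have hκuc : ℵ₀ < ℵ_ (μ+1) := by
    calc ℵ₀ = ℵ_ 0 := (Cardinal.aleph_zero).symm
    _ < _ := Cardinal.aleph_lt_aleph.2 (pos_iff_ne_zero.2 add_one_ne_zero')
  have hcof : σp.cof = ℵ_ (μ+1) := by rw [hσord]; exact hκreg.cof_eq
  have hIlim : Order.IsSuccLimit I := by rw [hI]; exact Cardinal.isSuccLimit_ord hc.1.le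
  have hμ1I : μ + 1 < I := by rw [Ordinal.add_one_eq_succ]; exact hIlim.succ_lt hμ
  have hσI : σp < I := by
    rw [hσord, hI]
    exact Cardinal.ord_lt_ord.2 (aleph_lt_inacc hc _ (hI ▸ hμ1I))
  have hσlim : Order.IsSuccLimit σp := by rw [hσord]; exact Cardinal.isSuccLimit_ord (aleph0_le_aleph _)
  have hσ0 : (0:Ordinal) < σp := hσlim.pos
  have hAP : ∀ x y : Ordinal, x < σp → y < σp → x + y < σp := by
    intro x y hx hy
    rw [hσord] at hx hy ⊢
    exact Ordinal.isPrincipal_add_ord (aleph0_le_aleph _) hx hy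
  have hOP : ∀ γ < σp, Ordinal.omega0 ^ γ < σp := by
    intro γ hγ
    rw [hσord] at hγ ⊢
    exact opow_lt_ord hκreg hκuc hγ
  have hOmμσ : Om μ < σp := Om_lt_Om add_one_ne_zero'
    (by rw [Ordinal.add_one_eq_succ]; exact Order.lt_succ μ)
  have hμ1σ : μ + 1 < σp := self_lt_Om_succ μ
  set S : Set Ordinal :=
    {b | b < σp ∧ σp ∈ H α (Iio b) ∧ H α (Iio b) ∩ Iio σp ⊆ Iio b} with hS
  have hpsi : psi σp α = sInf (S ∪ {σp}) := rfl
  have hone : ∀ x : Ordinal, x < x + 1 := fun x => by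
    rw [Ordinal.add_one_eq_succ]; exact Order.lt_succ x
  constructor
  · -- lower bound
    have hmem : psi σp α ∈ S ∪ {σp} := hpsi ▸ csInf_mem ⟨σp, Or.inr rfl⟩
    rcases hmem with ⟨hlt, hmem2, hsub⟩ | hmem
    · exact cand_gt hσI hlt hmem2 hsub hAP hOP
    · rw [mem_singleton_iff] at hmem
      rw [hmem]; exact hOmμσ
  · -- upper bound
    let b : ℕ → Ordinal := fun n =>
      Nat.rec (μ + 2) (fun _ p => sSup (H α (Iio p) ∩ Iio σp) + 1) n
    have hb0 : b 0 = μ + 2 := rfl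
    have hbs : ∀ n, b (n+1) = sSup (H α (Iio (b n)) ∩ Iio σp) + 1 := fun n => rfl
    have h21 : μ + 2 = (μ + 1) + 1 := by rw [add_assoc, one_add_one_eq_two]
    have hμ2σ : μ + 2 < σp := by
      rw [h21, Ordinal.add_one_eq_succ]
      exact hσlim.succ_lt hμ1σ
    have hblt : ∀ n, b n < σp := by
      intro n; induction n with
      | zero => exact hμ2σ
      | succ n ih =>
        rw [hbs n]
        have hsup : sSup (H α (Iio (b n)) ∩ Iio σp) < σp := by
          refine sSup_lt_ord' hσ0 (c := (b n).card + ℵ₀) ?_ ?_ ?_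
          · rw [hcof]
            refine Cardinal.add_lt_of_lt hκreg.aleph0_le ?_ hκuc
            rw [hσord] at ih
            exact Cardinal.lt_ord.1 ih
          · exact (Cardinal.mk_le_mk_of_subset inter_subset_left).trans mk_H_le
          · exact fun x hx => hx.2
        rw [Ordinal.add_one_eq_succ]
        exact hσlim.succ_lt hsup
    have hbdd : ∀ n, BddAbove (H α (Iio (b n)) ∩ Iio σp) := fun n => ⟨σp, fun x hx => hx.2.le⟩
    have hmono : Monotone b := by
      refine monotone_nat_of_le_succ fun n => ?_
      apply Classical.byContradiction; intro hcon
      have hcon' : b (n+1) < b n := not_le.1 hcon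
      have hle : b (n+1) ≤ sSup (H α (Iio (b n)) ∩ Iio σp) :=
        le_csSup (hbdd n) ⟨subset_H hcon', hblt (n+1)⟩
      have h2 : b (n+1) < b (n+1) := by
        conv_rhs => rw [hbs n]
        exact hle.trans_lt (hone _)
      exact absurd h2 (lt_irrefl _)
    have hBb : ∀ n, b n ≤ ⨆ n, b n := fun n =>
      le_ciSup ⟨σp, by rintro y ⟨m, rfl⟩; exact (hblt m).le⟩ n
    have hBσ : (⨆ n, b n) < σp := by
      refine Ordinal.iSup_lt_ord_lift ?_ hblt
      rw [Cardinal.mk_denumerable, Cardinal.lift_aleph0, hcof]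
      exact hκuc
    have hcand : (⨆ n, b n) ∈ S := by
      refine ⟨hBσ, ?_, ?_⟩
      · have h3 : μ + 1 < b 0 := by rw [hb0, h21]; exact hone _
        have h4 : μ + 1 ∈ Iio (⨆ n, b n) := mem_Iio.2 (h3.trans_le (hBb 0))
        exact Om_mem_H (subset_H h4)
      · intro x hx
        have hxU : x ∈ ⋃ n, H α (Iio (b n)) := H_iSup_subset hmono hx.1
        obtain ⟨n, hn⟩ := mem_iUnion.1 hxU
        have hle : x ≤ sSup (H α (Iio (b n)) ∩ Iio σp) := le_csSup (hbdd n) ⟨hn, hx.2⟩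
        have hxb : x < b (n+1) := by
          rw [hbs n]; exact hle.trans_lt (hone _)
        exact mem_Iio.2 (hxb.trans_le (hBb (n+1)))
    have hle : psi σp α ≤ ⨆ n, b n := by
      rw [hpsi]
      exact csInf_le' (Or.inl hcand)
    exact hle.trans_lt hBσ


end
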